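/- Assume (AL) and (AG). If a bounded continuous function h : ℝ^k → ℝ^n satisfies E[σ_g(W Z + b)ᵀ h(Z)] = 0 for every W ∈ ℝ^{n×k} and b ∈ ℝ^n (σ_g applied entrywise), then h(z) = 0 for all z ∈ ℝ^k. -/

import Mathlib

open MeasureTheory Filter
open scoped RealInnerProductSpace
open scoped NNReal ENNReal

noncomputable section

/-- Generator feature function φ(z; (W, b)) = σ_g(W z + b), σ_g applied entrywise. -/
noncomputable def phi (n k : ℕ) (σg : ℝ → ℝ) (W : Fin n → Fin k → ℝ) (b : Fin n → ℝ)
    (z : EuclideanSpace ℝ (Fin k)) : EuclideanSpace ℝ (Fin n) :=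
  WithLp.toLp 2 (fun i => σg ((∑ j, W i j * z j) + b i))


lemma hyperplane_null {k : ℕ} (w : Fin k → ℝ) (hw : w ≠ 0) (s : ℝ) :
    volume {z : EuclideanSpace ℝ (Fin k) | (∑ l, w l * z l) = s} = 0 := by
  classical
  obtain ⟨l0, hl0⟩ : ∃ l, w l ≠ 0 := by
    by_contra hc; push_neg at hc; exact hw (funext hc)
  set L : EuclideanSpace ℝ (Fin k) →ₗ[ℝ] ℝ :=
    { toFun := fun z => ∑ l, w l * z l
      map_add' := by
        intro x y
        simp only [PiLp.add_apply, mul_add, Finset.sum_add_distrib]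
      map_smul' := by
        intro c x
        simp only [PiLp.smul_apply, smul_eq_mul, RingHom.id_apply, Finset.mul_sum]
        exact Finset.sum_congr rfl fun l _ => by ring } with hL
  have hLapp : ∀ z : EuclideanSpace ℝ (Fin k), L z = ∑ l, w l * z l := fun z => rfl
  set z₀ : EuclideanSpace ℝ (Fin k) := EuclideanSpace.single l0 (s / w l0) with hz₀
  have hLz₀ : L z₀ = s := by
    rw [hLapp]
    rw [Finset.sum_eq_single l0]
    · simp [hz₀, EuclideanSpace.single_apply]
      field_simp
    · intro b _ hb
      simp [hz₀, EuclideanSpace.single_apply, hb]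
    · simp
  have hker : LinearMap.ker L ≠ ⊤ := by
    intro hk
    apply hl0
    have : L (EuclideanSpace.single l0 1) = 0 := by
      have := LinearMap.ker_eq_top.mp hk
      rw [this]; rfl
    rw [hLapp] at this
    rw [Finset.sum_eq_single l0] at this
    · simpa [EuclideanSpace.single_apply] using this
    · intro b _ hb
      simp [EuclideanSpace.single_apply, hb]
    · simp
  have hset : {z : EuclideanSpace ℝ (Fin k) | (∑ l, w l * z l) = s}
      = (fun x => (-z₀) + x) ⁻¹' ((LinearMap.ker L : Submodule ℝ (EuclideanSpace ℝ (Fin k))) : Set (EuclideanSpace ℝ (Fin k))) := by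
    ext z
    simp only [Set.mem_setOf_eq, Set.mem_preimage, SetLike.mem_coe, LinearMap.mem_ker,
      map_add, map_neg, hLz₀, ← hLapp]
    constructor
    · intro hz; rw [hz]; ring
    · intro hz; linarith
  rw [hset, measure_preimage_add]
  exact Measure.addHaar_submodule volume _ hker


lemma lemmaA {k : ℕ} (L : EuclideanSpace ℝ (Fin k) → ℝ) (hL : Continuous L)
    (g : EuclideanSpace ℝ (Fin k) → ℝ) (hgm : Measurable g) (hg : Integrable g)
    (hIic : ∀ s : ℝ, (∫ z in L ⁻¹' (Set.Iic s), g z) = 0) (htot : (∫ z, g z) = 0)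
    (c : ℝ → ℂ) (hc : Continuous c) (Mc : ℝ) (hMc : ∀ t, ‖c t‖ ≤ Mc) :
    (∫ z, g z • c (L z)) = 0 := by
  classical
  set gp : EuclideanSpace ℝ (Fin k) → ℝ≥0 := fun z => (g z).toNNReal with hgp
  set gm : EuclideanSpace ℝ (Fin k) → ℝ≥0 := fun z => (-g z).toNNReal with hgmdef
  have hgpm : Measurable gp := hgm.real_toNNReal
  have hgmm : Measurable gm := hgm.neg.real_toNNReal
  -- finiteness of restricted lintegrals
  have hfin : ∀ (S : Set (EuclideanSpace ℝ (Fin k))) (f : EuclideanSpace ℝ (Fin k) → ℝ≥0),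
      (∀ z, (f z : ℝ) ≤ |g z|) → (∫⁻ z in S, (f z : ℝ≥0∞)) ≠ ⊤ := by
    intro S f hf
    have h1 : (∫⁻ z in S, (f z : ℝ≥0∞)) ≤ ∫⁻ z, (f z : ℝ≥0∞) := setLIntegral_le_lintegral S _
    have h2 : (∫⁻ z, (f z : ℝ≥0∞)) ≤ ∫⁻ z, (‖g z‖₊ : ℝ≥0∞) := by
      refine lintegral_mono fun z => ?_
      rw [ENNReal.coe_le_coe, ← NNReal.coe_le_coe, coe_nnnorm, Real.norm_eq_abs]
      exact hf z
    exact ne_of_lt (lt_of_le_of_lt (le_trans h1 h2) hg.hasFiniteIntegral)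
  have hgple : ∀ z, ((gp z : ℝ)) ≤ |g z| := fun z => by
    simp only [hgp, Real.coe_toNNReal']
    exact max_le (le_abs_self _) (abs_nonneg _)
  have hgmle : ∀ z, ((gm z : ℝ)) ≤ |g z| := fun z => by
    simp only [hgmdef, Real.coe_toNNReal']
    refine max_le ?_ (abs_nonneg _)
    rw [abs_eq_max_neg]; exact le_max_right _ _
  -- key identity on measurable sets where the integral vanishes
  have hkey : ∀ S : Set (EuclideanSpace ℝ (Fin k)), MeasurableSet S → (∫ z in S, g z) = 0 →
      (∫⁻ z in S, (gp z : ℝ≥0∞)) = (∫⁻ z in S, (gm z : ℝ≥0∞)) := by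
    intro S hS h0
    have hid := integral_eq_lintegral_pos_part_sub_lintegral_neg_part
      (hg.restrict (s := S))
    rw [h0] at hid
    have hofp : ∀ z, ENNReal.ofReal (g z) = (gp z : ℝ≥0∞) := fun z => rfl
    have hofm : ∀ z, ENNReal.ofReal (-g z) = (gm z : ℝ≥0∞) := fun z => rfl
    simp only [hofp, hofm] at hid
    have h1 := hfin S gp hgple
    have h2 := hfin S gm hgmle
    have := sub_eq_zero.mp hid.symm
    exact (ENNReal.toReal_eq_toReal_iff' h1 h2).mp this
  set μp : Measure ℝ := Measure.map L (volume.withDensity fun z => (gp z : ℝ≥0∞)) with hμp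
  set μm : Measure ℝ := Measure.map L (volume.withDensity fun z => (gm z : ℝ≥0∞)) with hμm
  haveI : IsFiniteMeasure μp := by
    constructor
    rw [hμp, Measure.map_apply hL.measurable MeasurableSet.univ, Set.preimage_univ,
      withDensity_apply _ MeasurableSet.univ, Measure.restrict_univ]
    exact lt_top_iff_ne_top.mpr (by simpa using hfin Set.univ gp hgple)
  haveI : IsFiniteMeasure μm := by
    constructor
    rw [hμm, Measure.map_apply hL.measurable MeasurableSet.univ, Set.preimage_univ,
      withDensity_apply _ MeasurableSet.univ, Measure.restrict_univ]
    exact lt_top_iff_ne_top.mpr (by simpa using hfin Set.univ gm hgmle)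
  have hμeq : μp = μm := by
    refine Measure.ext_of_Iic μp μm fun s => ?_
    rw [hμp, hμm, Measure.map_apply hL.measurable measurableSet_Iic,
      Measure.map_apply hL.measurable measurableSet_Iic,
      withDensity_apply _ (hL.measurable measurableSet_Iic),
      withDensity_apply _ (hL.measurable measurableSet_Iic)]
    exact hkey _ (hL.measurable measurableSet_Iic) (hIic s)
  -- transfer integrals
  have htrans : ∀ (f : EuclideanSpace ℝ (Fin k) → ℝ≥0), Measurable f →
      (∫ t, c t ∂(Measure.map L (volume.withDensity fun z => (f z : ℝ≥0∞))))
        = ∫ z, (f z : ℝ) • c (L z) := by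
    intro f hf
    rw [integral_map hL.aemeasurable hc.aestronglyMeasurable,
      integral_withDensity_eq_integral_smul hf]
    simp [NNReal.smul_def]
  have hintp : Integrable (fun z => ((gp z : ℝ)) • c (L z)) := by
    refine Integrable.mono' (hg.abs.mul_const Mc)
      ((hgpm.coe_nnreal_real.aestronglyMeasurable).smul (hc.comp hL).aestronglyMeasurable)
      (Eventually.of_forall fun z => ?_)
    rw [norm_smul]
    refine mul_le_mul ?_ (hMc _) (norm_nonneg _) (abs_nonneg _)
    rw [Real.norm_eq_abs, abs_of_nonneg (gp z).coe_nonneg]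
    exact hgple z
  have hintm : Integrable (fun z => ((gm z : ℝ)) • c (L z)) := by
    refine Integrable.mono' (hg.abs.mul_const Mc)
      ((hgmm.coe_nnreal_real.aestronglyMeasurable).smul (hc.comp hL).aestronglyMeasurable)
      (Eventually.of_forall fun z => ?_)
    rw [norm_smul]
    refine mul_le_mul ?_ (hMc _) (norm_nonneg _) (abs_nonneg _)
    rw [Real.norm_eq_abs, abs_of_nonneg (gm z).coe_nonneg]
    exact hgmle z
  have hdecomp : (fun z => g z • c (L z))
      = fun z => ((gp z : ℝ)) • c (L z) - ((gm z : ℝ)) • c (L z) := by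
    funext z
    rw [← sub_smul]
    congr 1
    simp only [hgp, hgmdef, Real.coe_toNNReal']
    rcases le_total 0 (g z) with hz | hz
    · rw [max_eq_left hz, max_eq_right (by linarith)]; ring
    · rw [max_eq_right hz, max_eq_left (by linarith)]; ring
  rw [hdecomp, integral_sub hintp hintm, ← htrans gp hgpm, ← htrans gm hgmm, ← hμp, ← hμm,
    hμeq, sub_self]


set_option maxHeartbeats 2000000 in
/-- dual universal approximation: if a bounded continuous h : ℝ^k → ℝ^n is
orthogonal (in L²(q_Z)) to every generator feature σ_g(WZ + b), then h ≡ 0. -/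
theorem dual_universal_approximation
    (n k : ℕ)
    -- (AL): latent density
    (qZ : EuclideanSpace ℝ (Fin k) → ℝ)
    (hq_lip : ∃ L : NNReal, LipschitzWith L qZ)
    (hq_pos : ∀ z, 0 < qZ z)
    (hq_prob : ∫ z, qZ z = 1)
    -- (AG): generator activation
    (σg : ℝ → ℝ) (hσg_cont : Continuous σg)
    (hσg_bdd : ∃ M, ∀ r, |σg r| ≤ M)
    (hσg_lim : ∃ l u : ℝ, Tendsto σg atBot (nhds l) ∧ Tendsto σg atTop (nhds u) ∧ l < u)
    -- h bounded and continuous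
    (h : EuclideanSpace ℝ (Fin k) → EuclideanSpace ℝ (Fin n))
    (hh_cont : Continuous h) (hh_bdd : ∃ M, ∀ z, ‖h z‖ ≤ M)
    -- orthogonality to all features
    (horth : ∀ (W : Fin n → Fin k → ℝ) (b : Fin n → ℝ),
      (∫ z, ⟪phi n k σg W b z, h z⟫ * qZ z) = 0) :
    ∀ z, h z = 0 := by
  classical
  obtain ⟨l, u, hl, hu, hlu⟩ := hσg_lim
  obtain ⟨Mσ, hMσ⟩ := hσg_bdd
  obtain ⟨Mh, hMh⟩ := hh_bdd
  obtain ⟨Lq, hLq⟩ := hq_lip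
  have hq_cont : Continuous qZ := hLq.continuous
  have hq_int : Integrable qZ := by
    by_contra hni
    rw [integral_undef hni] at hq_prob; norm_num at hq_prob
  have hq_nonneg : ∀ z, 0 ≤ qZ z := fun z => (hq_pos z).le
  have hMσ0 : 0 ≤ Mσ := le_trans (abs_nonneg _) (hMσ 0)
  have hMh0 : 0 ≤ Mh := le_trans (norm_nonneg _) (hMh 0)
  have hhj_cont : ∀ j, Continuous fun z => h z j := fun j => (continuous_apply j).comp ((PiLp.continuous_ofLp (p := 2) (β := fun _ => ℝ)).comp hh_cont)
  have hhj_bdd : ∀ j z, |h z j| ≤ Mh := by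
    intro j z
    refine le_trans ?_ (hMh z)
    have h1 : (h z j) ^ 2 ≤ ∑ i, (h z i) ^ 2 := by
      refine Finset.single_le_sum (f := fun i => (h z i) ^ 2) (fun i _ => sq_nonneg _)
        (Finset.mem_univ j)
    have h2 : ‖h z‖ = Real.sqrt (∑ i, (h z i) ^ 2) := by
      rw [EuclideanSpace.norm_eq]
      congr 1
      exact Finset.sum_congr rfl fun i _ => by rw [Real.norm_eq_abs, sq_abs]
    rw [h2, ← Real.sqrt_sq_eq_abs]
    exact Real.sqrt_le_sqrt h1
  -- integrability helper
  have int_aux : ∀ (ψ : EuclideanSpace ℝ (Fin k) → ℝ) (C : ℝ), Continuous ψ →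
      (∀ z, |ψ z| ≤ C) → Integrable (fun z => ψ z * qZ z) := by
    intro ψ C hψ hC
    refine (hq_int.const_mul C).mono' ((hψ.mul hq_cont).aestronglyMeasurable)
      (Eventually.of_forall fun z => ?_)
    rw [Real.norm_eq_abs, abs_mul, abs_of_nonneg (hq_nonneg z)]
    exact mul_le_mul_of_nonneg_right (hC z) (hq_nonneg z)
  have int_term : ∀ (j : Fin n) (w : Fin k → ℝ) (t : ℝ),
      Integrable (fun z => σg ((∑ l, w l * z l) + t) * (h z j * qZ z)) := by
    intro j w t
    have hcont : Continuous fun z : EuclideanSpace ℝ (Fin k) =>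
        σg ((∑ l, w l * z l) + t) * h z j := by
      refine Continuous.mul (hσg_cont.comp ?_) (hhj_cont j)
      exact (continuous_finset_sum _ fun l _ =>
        (continuous_const.mul ((continuous_apply l).comp (PiLp.continuous_ofLp (p := 2) (β := fun _ => ℝ))))).add continuous_const
    have hbd : ∀ z, |σg ((∑ l, w l * z l) + t) * h z j| ≤ Mσ * Mh := by
      intro z
      rw [abs_mul]
      exact mul_le_mul (hMσ _) (hhj_bdd j z) (abs_nonneg _) hMσ0
    simpa [mul_assoc] using int_aux _ (Mσ * Mh) hcont hbd
  -- expansion of the orthogonality hypothesis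
  have hsum : ∀ (W : Fin n → Fin k → ℝ) (b : Fin n → ℝ),
      (∑ j, ∫ z, σg ((∑ l, W j l * z l) + b j) * (h z j * qZ z)) = 0 := by
    intro W b
    have h0 := horth W b
    have expand : (fun z => ⟪phi n k σg W b z, h z⟫ * qZ z)
        = fun z => ∑ j, σg ((∑ l, W j l * z l) + b j) * (h z j * qZ z) := by
      funext z
      simp only [phi, PiLp.inner_apply, RCLike.inner_apply, conj_trivial, Finset.sum_mul,
        mul_assoc, WithLp.ofLp_toLp]
      exact Finset.sum_congr rfl fun i _ => by ring
    rw [expand, integral_finset_sum _ (fun j _ => int_term j (W j) (b j))] at h0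
    exact h0
  -- two points with different σg values
  obtain ⟨β₁, hβ₁⟩ : ∃ β, (l + u) / 2 < σg β :=
    (hu.eventually (eventually_gt_nhds (by linarith : (l + u) / 2 < u))).exists
  obtain ⟨β₀, hβ₀⟩ : ∃ β, σg β < (l + u) / 2 :=
    (hl.eventually (eventually_lt_nhds (by linarith : l < (l + u) / 2))).exists
  have hβne : σg β₀ ≠ σg β₁ := by linarith
  -- value of the integral for zero weights
  have hT0 : ∀ (j : Fin n) (t : ℝ),
      (∫ z, σg ((∑ l, (0 : Fin k → ℝ) l * z l) + t) * (h z j * qZ z))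
        = σg t * ∫ z, h z j * qZ z := by
    intro j t
    rw [← integral_const_mul]
    congr 1; funext z; simp
  -- means vanish
  have hm : ∀ j : Fin n, (∫ z, h z j * qZ z) = 0 := by
    intro j0
    have e0 := hsum (fun _ => 0) (fun _ => β₀)
    have e1 := hsum (fun _ => 0) (fun j => if j = j0 then β₁ else β₀)
    simp only [hT0] at e0 e1
    have e2 : (σg β₁ - σg β₀) * (∫ z, h z j0 * qZ z) = 0 := by
      have e3 : (∑ j : Fin n, (σg (if j = j0 then β₁ else β₀) * (∫ z, h z j * qZ z)
          - σg β₀ * (∫ z, h z j * qZ z))) = 0 := by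
        rw [Finset.sum_sub_distrib, e1, e0, sub_zero]
      rw [Finset.sum_eq_single j0] at e3
      · rw [if_pos rfl, ← sub_mul] at e3; exact e3
      · intro b _ hb; rw [if_neg hb, sub_self]
      · intro hb; exact absurd (Finset.mem_univ j0) hb
    rcases mul_eq_zero.mp e2 with hc | hc
    · exact absurd (sub_eq_zero.mp hc).symm hβne
    · exact hc
  -- per-coordinate orthogonality to all ridge functions
  have hT : ∀ (j : Fin n) (w : Fin k → ℝ) (t : ℝ),
      (∫ z, σg ((∑ l, w l * z l) + t) * (h z j * qZ z)) = 0 := by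
    intro j0 w t
    have e := hsum (fun j => if j = j0 then w else 0) (fun j => if j = j0 then t else β₀)
    rw [Finset.sum_eq_single j0] at e
    · simpa using e
    · intro b _ hb
      simp only [if_neg hb]
      rw [hT0, hm, mul_zero]
    · intro hb; exact absurd (Finset.mem_univ j0) hb
  -- main part: fix a coordinate
  have key : ∀ (j0 : Fin n) (z : EuclideanSpace ℝ (Fin k)), h z j0 * qZ z = 0 := by
    intro j0
    set g : EuclideanSpace ℝ (Fin k) → ℝ := fun z => h z j0 * qZ z with hgdef
    have hg_cont : Continuous g := (hhj_cont j0).mul hq_cont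
    have hg_int : Integrable g := int_aux _ Mh (hhj_cont j0) (hhj_bdd j0)
    have htot : (∫ z, g z) = 0 := hm j0
    -- half-space integrals vanish
    have hhalf : ∀ (w : Fin k → ℝ), w ≠ 0 → ∀ s : ℝ,
        (∫ z in (fun z : EuclideanSpace ℝ (Fin k) => ∑ l, w l * z l) ⁻¹' (Set.Iic s), g z)
          = 0 := by
      intro w hw s
      set L : EuclideanSpace ℝ (Fin k) → ℝ := fun z => ∑ l, w l * z l with hLdef
      have hLc : Continuous L := continuous_finset_sum _ fun l _ =>
        continuous_const.mul ((continuous_apply l).comp (PiLp.continuous_ofLp (p := 2) (β := fun _ => ℝ)))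
      have hmeasIoi : MeasurableSet {z : EuclideanSpace ℝ (Fin k) | s < L z} :=
        measurableSet_lt measurable_const hLc.measurable
      have hplane : volume {z : EuclideanSpace ℝ (Fin k) | L z = s} = 0 := by
        simpa only [hLdef] using hyperplane_null w hw s
      have hae : ∀ᵐ z : EuclideanSpace ℝ (Fin k), L z ≠ s := by
        rw [ae_iff]; simpa [not_not] using hplane
      have hFm0 : ∀ m : ℕ, (∫ z, σg (((m : ℝ) + 1) * (L z - s)) * g z) = 0 := by
        intro m
        have harg : ∀ z : EuclideanSpace ℝ (Fin k),
            (∑ l, ((((m : ℝ) + 1)) * w l) * z l) + -((((m : ℝ) + 1)) * s)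
              = ((m : ℝ) + 1) * (L z - s) := by
          intro z
          simp only [hLdef]
          rw [mul_sub, Finset.mul_sum, ← sub_eq_add_neg]
          congr 1
          exact Finset.sum_congr rfl fun l _ => by ring
        have e := hT j0 (fun l => ((m : ℝ) + 1) * w l) (-(((m : ℝ) + 1) * s))
        simp only [harg] at e
        exact e
      have hconv : Tendsto (fun m : ℕ => ∫ z, σg (((m : ℝ) + 1) * (L z - s)) * g z) atTop
          (nhds (∫ z, (if s < L z then u else l) * g z)) := by
        refine tendsto_integral_of_dominated_convergence (fun z => Mσ * |g z|)
          (fun m => ((hσg_cont.comp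
            ((continuous_const.mul (hLc.sub continuous_const)))).mul hg_cont).aestronglyMeasurable)
          (hg_int.abs.const_mul Mσ)
          (fun m => Eventually.of_forall fun z => ?_) ?_
        · rw [Real.norm_eq_abs, abs_mul]
          exact mul_le_mul_of_nonneg_right (hMσ _) (abs_nonneg _)
        · filter_upwards [hae] with z hz
          have hmt : Tendsto (fun m : ℕ => ((m : ℝ) + 1)) atTop atTop :=
            tendsto_atTop_add_const_right _ 1 tendsto_natCast_atTop_atTop
          rcases lt_or_gt_of_ne hz with hzs | hzs
          · rw [if_neg (not_lt.mpr hzs.le)]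
            refine Tendsto.mul_const _ (hl.comp ?_)
            exact hmt.atTop_mul_const_of_neg (by linarith : L z - s < 0)
          · rw [if_pos hzs]
            refine Tendsto.mul_const _ (hu.comp ?_)
            exact hmt.atTop_mul_const (by linarith : (0:ℝ) < L z - s)
      have hG : (∫ z, (if s < L z then u else l) * g z) = 0 := by
        have hzero : Tendsto (fun _ : ℕ => (0 : ℝ)) atTop
            (nhds (∫ z, (if s < L z then u else l) * g z)) := by
          simpa only [hFm0] using hconv
        exact tendsto_nhds_unique hzero tendsto_const_nhds
      have hsplit : (fun z : EuclideanSpace ℝ (Fin k) => (if s < L z then u else l) * g z)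
          = fun z => l * g z + (u - l) * Set.indicator {z | s < L z} g z := by
        funext z
        by_cases hzs : s < L z <;>
          simp [Set.indicator_apply, Set.mem_setOf_eq, hzs] <;> ring
      rw [hsplit] at hG
      have hind_int : Integrable (Set.indicator {z : EuclideanSpace ℝ (Fin k) | s < L z} g) :=
        hg_int.indicator hmeasIoi
      rw [integral_add (hg_int.const_mul l) (hind_int.const_mul (u - l)), integral_const_mul,
        integral_const_mul, htot, mul_zero, zero_add, integral_indicator hmeasIoi] at hG
      have hIoi : (∫ z in {z : EuclideanSpace ℝ (Fin k) | s < L z}, g z) = 0 := by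
        rcases mul_eq_zero.mp hG with hc | hc
        · exact absurd hc (sub_ne_zero.mpr (ne_of_gt hlu))
        · exact hc
      have hcompl : (∫ z in {z : EuclideanSpace ℝ (Fin k) | s < L z}ᶜ, g z) = 0 := by
        have h4 := integral_add_compl hmeasIoi hg_int
        rw [hIoi, zero_add, htot] at h4
        exact h4
      have hseteq : L ⁻¹' (Set.Iic s) = {z : EuclideanSpace ℝ (Fin k) | s < L z}ᶜ := by
        ext z
        simp [Set.mem_Iic, not_lt]
      rw [hseteq]
      exact hcompl
    -- Fourier transform of g vanishes
    set gc : EuclideanSpace ℝ (Fin k) → ℂ := fun z => (g z : ℂ) with hgc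
    have hgc_cont : Continuous gc := Complex.continuous_ofReal.comp hg_cont
    have hgc_int : Integrable gc := hg_int.ofReal
    have hF0 : FourierTransform.fourier gc = 0 := by
      funext ξ
      rw [Real.fourier_eq']
      show _ = (0 : ℂ)
      by_cases hξ : ξ = (0 : EuclideanSpace ℝ (Fin k))
      · subst hξ
        simp only [inner_zero_right, mul_zero, Complex.ofReal_zero, zero_mul, Complex.exp_zero,
          one_smul]
        simp only [hgc]
        have hcast : (∫ v : EuclideanSpace ℝ (Fin k), ((g v : ℂ))) = (((∫ v, g v : ℝ)) : ℂ) :=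
          integral_ofReal
        rw [hcast, htot, Complex.ofReal_zero]
      · set w : Fin k → ℝ := fun l => ξ l with hwdef
        have hw : w ≠ 0 := by
          intro hw0
          apply hξ
          ext lidx
          simpa [hwdef] using congrFun hw0 lidx
        have hLc : Continuous fun z : EuclideanSpace ℝ (Fin k) => ∑ l, w l * z l :=
          continuous_finset_sum _ fun l _ => continuous_const.mul ((continuous_apply l).comp (PiLp.continuous_ofLp (p := 2) (β := fun _ => ℝ)))
        set c : ℝ → ℂ := fun t : ℝ => Complex.exp ((↑(-2 * Real.pi * t)) * Complex.I) with hcdef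
        have hcexp : Continuous c := by
          refine Complex.continuous_exp.comp (Continuous.mul ?_ continuous_const)
          exact Complex.continuous_ofReal.comp (continuous_const.mul continuous_id)
        have hA := lemmaA (fun z => ∑ l, w l * z l) hLc g hg_cont.measurable hg_int
          (hhalf w hw) htot c hcexp 1
          (fun t => le_of_eq (Complex.norm_exp_ofReal_mul_I _))
        have heq : (fun v : EuclideanSpace ℝ (Fin k) =>
            Complex.exp ((↑(-2 * Real.pi * ⟪v, ξ⟫)) * Complex.I) • gc v)
            = fun z : EuclideanSpace ℝ (Fin k) => g z • c (∑ l, w l * z l) := by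
          funext v
          have hinner : ⟪v, ξ⟫ = ∑ l, w l * v l := by
            simp only [PiLp.inner_apply, RCLike.inner_apply, conj_trivial, hwdef]
          simp only [hcdef]
          rw [hinner, smul_eq_mul, Complex.real_smul, mul_comm]
        rw [heq]
        exact hA
    have hinv := hgc_cont.fourierInv_fourier_eq hgc_int (by rw [hF0]; exact integrable_zero _ _ _)
    rw [hF0] at hinv
    have hFinv0 : (FourierTransformInv.fourierInv (0 : EuclideanSpace ℝ (Fin k) → ℂ) : EuclideanSpace ℝ (Fin k) → ℂ) = 0 := by
      funext ξ
      rw [Real.fourierInv_eq]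
      simp
    rw [hFinv0] at hinv
    intro z
    have hz0 : gc z = 0 := by
      have := congrFun hinv z
      simpa using this.symm
    have : (h z j0 * qZ z : ℂ) = 0 := by
      simpa [hgc, hgdef] using hz0
    simpa using this
  intro z
  ext j
  have hkey := key j z
  rcases mul_eq_zero.mp hkey with hc | hc
  · simpa using hc
  · exact absurd hc (ne_of_gt (hq_pos z))


end
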